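/- arXiv:2501.16351 — 5 statements merged into one kernel-verified Lean document; each statement's English description precedes it below -/
import Mathlib

section
/- Let J = J_0 ⊕ J_1 be a Jordan superalgebra over a field of characteristic 0 with e ∈ J_0 satisfying e·e = 0, and odd elements f_1, f_2 with e·f_1 = μ f_1 + f_2 and e·f_2 = μ f_2 for some scalar μ. Then 2μ^3 = 0, i.e. μ = 0. -/
/-- The sign `(-1)^a` for a parity `a : ZMod 2`, as an element of the field `F`. -/
def sgn (F : Type*) [Field F] (a : ZMod 2) : F := if a = 0 then 1 else -1

/-- A Jordan superalgebra structure: a `Z/2`-graded vector space `J = V 0 ⊕ V 1`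
with a bilinear multiplication respecting the grading, super-commutative, and
satisfying the graded Jordan identity. -/
structure IsJordanSuperalgebra (F : Type*) [Field F] {J : Type*} [AddCommGroup J] [Module F J]
    (mul : J →ₗ[F] J →ₗ[F] J) (V : ZMod 2 → Submodule F J) : Prop where
  decomp : DirectSum.IsInternal V
  grading : ∀ a b : ZMod 2, ∀ x ∈ V a, ∀ y ∈ V b, mul x y ∈ V (a + b)
  supercomm : ∀ a b : ZMod 2, ∀ x ∈ V a, ∀ y ∈ V b, mul x y = sgn F (a * b) • mul y x
  jordan : ∀ a b c d : ZMod 2, ∀ x ∈ V a, ∀ y ∈ V b, ∀ z ∈ V c, ∀ t ∈ V d,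
    mul (mul (mul x y) z) t
      + sgn F (b * c + b * d + c * d) • mul (mul (mul x t) z) y
      + sgn F (a * b + a * c + a * d + c * d) • mul (mul (mul y t) z) x
    = mul (mul x y) (mul z t)
      + sgn F (d * (b + c)) • mul (mul x t) (mul y z)
      + sgn F (b * c) • mul (mul x z) (mul y t)


theorem jordan_block_squarezero (F : Type*) [Field F] [CharZero F] {J : Type*}
    [AddCommGroup J] [Module F J]
    (mul : J →ₗ[F] J →ₗ[F] J) (V : ZMod 2 → Submodule F J)
    (hJ : IsJordanSuperalgebra F mul V)
    (e f₁ f₂ : J) (μ : F) (he : e ∈ V 0) (hf₁ : f₁ ∈ V 1) (hf₂ : f₂ ∈ V 1)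
    (hee : mul e e = 0) (hef₁ : mul e f₁ = μ • f₁ + f₂) (hef₂ : mul e f₂ = μ • f₂)
    (hf₂ne : f₂ ≠ 0) :
    μ = 0 := by
  have hcomm : mul f₂ e = μ • f₂ := by
    have h := hJ.supercomm 1 0 f₂ hf₂ e he
    simpa [sgn, hef₂] using h
  have h := hJ.jordan 0 0 0 1 e he e he e he f₂ hf₂
  simp only [hee, hef₂, hcomm, map_zero, map_smul, LinearMap.zero_apply,
    LinearMap.smul_apply, LinearMap.map_smul, smul_smul, sgn,
    mul_zero, zero_mul, add_zero, zero_add, if_pos rfl] at h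
  -- h should give 2 μ^3 • f₂ = 0
  have h3 : (μ * μ * μ + μ * μ * μ) • f₂ = 0 := by
    rw [add_smul]; simpa using h
  rcases smul_eq_zero.mp h3 with hc | hc
  · have h2 : (2 : F) * μ ^ 3 = 0 := by linear_combination hc
    have h4 : μ ^ 3 = 0 := by
      rcases mul_eq_zero.mp h2 with h5 | h5
      · exact absurd h5 two_ne_zero
      · exact h5
    exact pow_eq_zero_iff (n := 3) (by norm_num) |>.mp h4
  · exact absurd hc hf₂ne
end

section
/- Let J = J_0 ⊕ J_1 be a Jordan superalgebra over a field of characteristic 0 with an idempotent e ∈ J_0 (e·e = e) and odd elements f_1, f_2 satisfying e·f_1 = μ f_1 + f_2 and e·f_2 = μ f_2 for a scalar μ. Then both 1 - 6μ + 6μ^2 = 0 and μ(μ - 1)(2μ - 1) = 0 must hold, which is impossible; hence no such configuration exists. Equivalently: there is no scalar μ in a field of characteristic 0 with 1 - 6μ + 6μ^2 = 0 and (μ-1)μ(2μ-1) = 0. -/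
theorem no_jordan_block_idempotent (F : Type*) [Field F] [CharZero F] {J : Type*}
    [AddCommGroup J] [Module F J]
    (mul : J →ₗ[F] J →ₗ[F] J) (V : ZMod 2 → Submodule F J)
    (hJ : IsJordanSuperalgebra F mul V)
    (e f₁ f₂ : J) (μ : F) (he : e ∈ V 0) (hf₁ : f₁ ∈ V 1) (hf₂ : f₂ ∈ V 1)
    (hee : mul e e = e) (hef₁ : mul e f₁ = μ • f₁ + f₂) (hef₂ : mul e f₂ = μ • f₂)
    (hf₂ne : f₂ ≠ 0) :
    False := by
  classical
  have hcomm : ∀ f, f ∈ V 1 → mul f e = mul e f := by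
    intro f hf
    have h := hJ.supercomm 1 0 f hf e he
    simpa [sgn] using h
  have hmem : ∀ f, f ∈ V 1 → mul e f ∈ V 1 := by
    intro f hf
    have := hJ.grading 0 1 e he f hf
    simpa using this
  have key : ∀ f, f ∈ V 1 →
      mul e f + mul e (mul e (mul e f)) + mul e (mul e (mul e f))
        = mul e (mul e f) + mul e (mul e f) + mul e (mul e f) := by
    intro f hf
    have hj := hJ.jordan 0 0 0 1 e he e he e he f hf
    simp only [sgn, mul_zero, zero_mul, add_zero, zero_add, if_pos rfl, if_true, one_smul, hee] at hj
    rw [hcomm (mul e f) (hmem f hf)] at hj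
    rw [hcomm (mul e (mul e f)) (hmem _ (hmem f hf))] at hj
    exact hj
  have k2 := key f₂ hf₂
  simp only [hef₂, map_smul] at k2
  have h2 : (2 * (μ * μ * μ) - 3 * (μ * μ) + μ) • f₂ = 0 := by
    linear_combination (norm := module) k2
  have k1 := key f₁ hf₁
  simp only [hef₁, hef₂, map_add, map_smul] at k1
  have h1 : (2 * (μ * μ * μ) - 3 * (μ * μ) + μ) • f₁
      + (6 * (μ * μ) - 6 * μ + 1) • f₂ = 0 := by
    linear_combination (norm := module) k1
  -- extract scalar equations
  have hp : (2 * (μ * μ * μ) - 3 * (μ * μ) + μ) = 0 := by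
    rcases smul_eq_zero.mp h2 with h | h
    · exact h
    · exact absurd h hf₂ne
  rw [hp, zero_smul, zero_add] at h1
  have hq : (6 * (μ * μ) - 6 * μ + 1 : F) = 0 := by
    rcases smul_eq_zero.mp h1 with h | h
    · exact h
    · exact absurd h hf₂ne
  have : (1 : F) = 0 := by
    linear_combination (18 - 36 * μ) * hp + (12 * μ * μ - 12 * μ + 1) * hq
  exact one_ne_zero this
end

section
/- Let J be a Jordan superalgebra over a field of characteristic 0 with two orthogonal even idempotents e_1, e_2 (e_1·e_1 = e_1, e_2·e_2 = e_2, e_1·e_2 = 0) and an odd element f with e_1·f = (1/2) f and e_2·f = β f. Then β(2β - 1) = 0, i.e. β ∈ {0, 1/2}. -/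
theorem second_idempotent_eigenvalue (F : Type*) [Field F] [CharZero F] {J : Type*}
    [AddCommGroup J] [Module F J]
    (mul : J →ₗ[F] J →ₗ[F] J) (V : ZMod 2 → Submodule F J)
    (hJ : IsJordanSuperalgebra F mul V)
    (e₁ e₂ f : J) (β : F)
    (he₁ : e₁ ∈ V 0) (he₂ : e₂ ∈ V 0) (hf : f ∈ V 1)
    (h11 : mul e₁ e₁ = e₁) (h22 : mul e₂ e₂ = e₂) (h12 : mul e₁ e₂ = 0)
    (h1f : mul e₁ f = (1 / 2 : F) • f) (h2f : mul e₂ f = β • f) (hf0 : f ≠ 0) :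
    β * (2 * β - 1) = 0 := by
  have hfe2 : mul f e₂ = β • f := by
    have h := hJ.supercomm 1 0 f hf e₂ he₂
    simpa [sgn, h2f] using h
  have hfe1 : mul f e₁ = (1/2 : F) • f := by
    have h := hJ.supercomm 1 0 f hf e₁ he₁
    simpa [sgn, h1f] using h
  have key := hJ.jordan 0 0 0 1 e₁ he₁ e₂ he₂ e₂ he₂ f hf
  simp only [sgn, mul_zero, zero_mul, mul_one, one_mul, add_zero, zero_add,
    if_pos rfl, one_smul, h12, h1f, h2f, h22, hfe2, hfe1,
    map_smul, LinearMap.smul_apply, map_zero,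
    LinearMap.zero_apply, smul_zero, smul_smul, if_true] at key
  rw [← add_smul] at key
  have h2 : ((1/2 * β * β + β * β * (1/2)) - 1/2 * β : F) • f = 0 := by
    rw [sub_smul, key, sub_self]
  have hβ : ((1/2 * β * β + β * β * (1/2)) - 1/2 * β : F) = 0 :=
    (smul_eq_zero.mp h2).resolve_right hf0
  linear_combination 2 * hβ
end

section
/- Let J be a Jordan superalgebra over a field of characteristic 0 with even elements e_1, e_2 satisfying e_1·e_1 = e_2, e_2·e_2 = 0, e_1·e_2 = 0 (even part isomorphic to B_3), and an odd element f with e_1·f = μ f and e_2·f = ν f. Then μ = 0 and ν = 0. -/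
theorem B3_even_part_acts_trivially (F : Type*) [Field F] [CharZero F] {J : Type*}
    [AddCommGroup J] [Module F J]
    (mul : J →ₗ[F] J →ₗ[F] J) (V : ZMod 2 → Submodule F J)
    (hJ : IsJordanSuperalgebra F mul V)
    (e₁ e₂ f : J) (μ ν : F)
    (he₁ : e₁ ∈ V 0) (he₂ : e₂ ∈ V 0) (hf : f ∈ V 1)
    (h11 : mul e₁ e₁ = e₂) (h22 : mul e₂ e₂ = 0) (h12 : mul e₁ e₂ = 0)
    (h1f : mul e₁ f = μ • f) (h2f : mul e₂ f = ν • f) (hf0 : f ≠ 0) :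
    μ = 0 ∧ ν = 0 := by
  have hf1 : mul f e₁ = μ • f := by
    have h := hJ.supercomm 0 1 e₁ he₁ f hf
    simp [sgn] at h
    rw [← h, h1f]
  have hf2 : mul f e₂ = ν • f := by
    have h := hJ.supercomm 0 1 e₂ he₂ f hf
    simp [sgn] at h
    rw [← h, h2f]
  have h21 : mul e₂ e₁ = 0 := by
    have h := hJ.supercomm 0 0 e₂ he₂ e₁ he₁
    simp [sgn] at h
    rw [h, h12]
  have hje2 := hJ.jordan 0 0 0 1 e₂ he₂ e₂ he₂ e₂ he₂ f hf
  simp only [h22, h2f, hf2, map_zero, LinearMap.zero_apply, map_smul,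
    LinearMap.smul_apply, smul_smul, sgn, zero_add, add_zero, mul_zero, zero_mul,
    if_pos rfl, if_true, one_mul, one_smul] at hje2
  -- hje2 : 0 + (ν*ν*ν) • f + (ν*ν*ν) • f = 0 + 0 + 0 (roughly)
  have hν : ν = 0 := by
    have : (2 * ν ^ 3) • f = 0 := by
      rw [show (2 * ν ^ 3 : F) = ν * ν * ν + ν * ν * ν by ring, add_smul]
      linear_combination (norm := module) hje2
    rcases smul_eq_zero.mp this with h2 | h2
    · rcases mul_eq_zero.mp h2 with h3 | h3
      · norm_num at h3
      · exact pow_eq_zero_iff (by norm_num) |>.mp h3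
    · exact absurd h2 hf0
  have hje1 := hJ.jordan 0 0 0 1 e₁ he₁ e₁ he₁ e₁ he₁ f hf
  simp only [h11, h21, h1f, hf1, hf2, h2f, hν, zero_smul, map_zero,
    LinearMap.zero_apply, map_smul, LinearMap.smul_apply, smul_smul, sgn,
    zero_add, add_zero, mul_zero, zero_mul, if_pos rfl, if_true, one_mul, one_smul, smul_zero] at hje1
  have hμ : μ = 0 := by
    have : (2 * μ ^ 3) • f = 0 := by
      rw [show (2 * μ ^ 3 : F) = μ * μ * μ + μ * μ * μ by ring, add_smul]
      linear_combination (norm := module) hje1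
    rcases smul_eq_zero.mp this with h2 | h2
    · rcases mul_eq_zero.mp h2 with h3 | h3
      · norm_num at h3
      · exact pow_eq_zero_iff (by norm_num) |>.mp h3
    · exact absurd h2 hf0
  exact ⟨hμ, hν⟩
end

section
/- Let J be a (1,3)-type superalgebra over ℂ with even basis {e} and odd basis {f_1, f_2, f_3}, products e·e = 0, e·f_1 = μ f_1 + f_2, e·f_2 = μ f_2 + f_3, e·f_3 = μ f_3 (L_e a single Jordan block), f_i f_j = ξ_{ij} e. If J is a Jordan superalgebra then μ = 0 and all ξ_{ij} = 0; i.e. the only Jordan superalgebra with L_e a full 3×3 Jordan block and e² = 0 has multiplication e·f_1 = f_2, e·f_2 = f_3 and trivial odd-odd products. -/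
private lemma indep3 {J : Type*} [AddCommGroup J] [Module ℂ J]
    {f₁ f₂ f₃ : J} (h : LinearIndependent ℂ ![f₁, f₂, f₃]) {a b c : ℂ}
    (h0 : a • f₁ + b • f₂ + c • f₃ = 0) : a = 0 ∧ b = 0 ∧ c = 0 := by
  have H := Fintype.linearIndependent_iff.mp h ![a, b, c]
  simp only [Fin.sum_univ_three, Matrix.cons_val_zero, Matrix.cons_val_one, Matrix.head_cons,
    Matrix.cons_val_two, Matrix.tail_cons] at H
  have H' := H h0
  exact ⟨H' 0, H' 1, H' 2⟩

theorem full_jordan_block_classification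
    {J : Type*} [AddCommGroup J] [Module ℂ J]
    (mul : J →ₗ[ℂ] J →ₗ[ℂ] J) (V : ZMod 2 → Submodule ℂ J)
    (hJ : IsJordanSuperalgebra ℂ mul V)
    (e f₁ f₂ f₃ : J) (μ ξ₁₂ ξ₁₃ ξ₂₃ : ℂ)
    (he : e ∈ V 0) (hf₁ : f₁ ∈ V 1) (hf₂ : f₂ ∈ V 1) (hf₃ : f₃ ∈ V 1)
    (hee : mul e e = 0)
    (hef₁ : mul e f₁ = μ • f₁ + f₂) (hef₂ : mul e f₂ = μ • f₂ + f₃)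
    (hef₃ : mul e f₃ = μ • f₃)
    (h12 : mul f₁ f₂ = ξ₁₂ • e) (h13 : mul f₁ f₃ = ξ₁₃ • e) (h23 : mul f₂ f₃ = ξ₂₃ • e)
    (he0 : e ≠ 0) (hind : LinearIndependent ℂ ![f₁, f₂, f₃]) :
    μ = 0 ∧ ξ₁₂ = 0 ∧ ξ₁₃ = 0 ∧ ξ₂₃ = 0 := by
  have hs0 : sgn ℂ (0 : ZMod 2) = 1 := by simp [sgn]
  have hs1 : sgn ℂ (1 : ZMod 2) = -1 := by simp [sgn]
  have hcomm0 : ∀ x, x ∈ V 1 → mul x e = mul e x := by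
    intro x hx
    have := hJ.supercomm 0 1 e he x hx
    rw [show (0 : ZMod 2) * 1 = 0 from rfl, hs0, one_smul] at this
    exact this.symm
  have hcomm1 : ∀ x y, x ∈ V 1 → y ∈ V 1 → mul y x = -mul x y := by
    intro x y hx hy
    have := hJ.supercomm 1 1 x hx y hy
    rw [show (1 : ZMod 2) * 1 = 1 from rfl, hs1, neg_smul, one_smul] at this
    rw [this, neg_neg]
  have hf₁e : mul f₁ e = μ • f₁ + f₂ := by rw [← hcomm0 f₁ hf₁] at hef₁; exact hef₁
  have hf₂e : mul f₂ e = μ • f₂ + f₃ := by rw [← hcomm0 f₂ hf₂] at hef₂; exact hef₂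
  have hf₃e : mul f₃ e = μ • f₃ := by rw [← hcomm0 f₃ hf₃] at hef₃; exact hef₃
  have h21 : mul f₂ f₁ = -(ξ₁₂ • e) := by rw [hcomm1 f₁ f₂ hf₁ hf₂, h12]
  have h31 : mul f₃ f₁ = -(ξ₁₃ • e) := by rw [hcomm1 f₁ f₃ hf₁ hf₃, h13]
  have h32 : mul f₃ f₂ = -(ξ₂₃ • e) := by rw [hcomm1 f₂ f₃ hf₂ hf₃, h23]
  have h11 : mul f₁ f₁ = 0 := by
    have h := hcomm1 f₁ f₁ hf₁ hf₁
    have h2 : (2 : ℂ) • mul f₁ f₁ = 0 := by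
      rw [two_smul]; nth_rewrite 2 [h]; simp
    simpa using h2
  have hmu : μ = 0 := by
    have hjd := hJ.jordan 0 0 0 1 e he e he e he f₁ hf₁
    simp only [mul_zero, zero_mul, mul_one, one_mul, add_zero, zero_add, hs0, hs1, one_smul,
      hee, hef₁, hef₂, hef₃, hf₁e, hf₂e, hf₃e, map_zero, LinearMap.zero_apply, map_add,
      map_smul, LinearMap.add_apply, LinearMap.smul_apply, smul_add, smul_smul,
      smul_zero] at hjd
    have key : (2 * μ ^ 3) • f₁ + (6 * μ ^ 2) • f₂ + (6 * μ) • f₃ = 0 := by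
      linear_combination (norm := module) hjd
    have := (indep3 hind key).2.2
    have h6 : (6 : ℂ) ≠ 0 := by norm_num
    exact (mul_eq_zero.mp this).resolve_left h6
  subst hmu
  simp only [zero_smul, zero_add] at hef₁ hef₂ hef₃ hf₁e hf₂e hf₃e
  have h30 : mul f₃ e = 0 := hf₃e
  have hξ₂₃ : ξ₂₃ = 0 := by
    have hjd := hJ.jordan 0 0 1 1 e he e he f₁ hf₁ f₂ hf₂
    simp only [mul_zero, zero_mul, mul_one, one_mul, add_zero, zero_add, hs0, hs1, one_smul,
      neg_smul, neg_neg, smul_neg, hee, hef₁, hef₂, hef₃, hf₁e, hf₂e, h30, h12, h13, h23,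
      h21, h31, h32, h11, map_zero, LinearMap.zero_apply, map_add, map_smul, map_neg,
      LinearMap.add_apply, LinearMap.smul_apply, LinearMap.neg_apply, smul_add, smul_smul,
      smul_zero, neg_zero] at hjd
    have key : (2 * ξ₂₃) • e = 0 := by linear_combination (norm := module) -hjd
    rcases smul_eq_zero.mp key with h | h
    · have : (2 : ℂ) ≠ 0 := by norm_num
      exact (mul_eq_zero.mp h).resolve_left this
    · exact absurd h he0
  have hjd := hJ.jordan 0 1 1 1 e he f₁ hf₁ f₁ hf₁ f₂ hf₂
  simp only [mul_zero, zero_mul, mul_one, one_mul, add_zero, zero_add, hs0, hs1, one_smul,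
    neg_smul, neg_neg, smul_neg, show (1 : ZMod 2) + 1 = 0 from rfl,
    hee, hef₁, hef₂, hef₃, hf₁e, hf₂e, h30, h12, h13, h23,
    h21, h31, h32, h11, map_zero, LinearMap.zero_apply, map_add, map_smul, map_neg,
    LinearMap.add_apply, LinearMap.smul_apply, LinearMap.neg_apply, smul_add, smul_smul,
    smul_zero, neg_zero] at hjd
  have key : (0 : ℂ) • f₁ + ξ₁₃ • f₂ + (-(2 * ξ₁₂)) • f₃ = 0 := by
    linear_combination (norm := module) hjd
  obtain ⟨-, hb, hc⟩ := indep3 hind key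
  refine ⟨rfl, ?_, hb, hξ₂₃⟩
  have : (2 : ℂ) ≠ 0 := by norm_num
  exact (mul_eq_zero.mp (neg_eq_zero.mp hc)).resolve_left this
end
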